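/- For every u ∈ X∖{0}: (1) if 0 < λ < λ(u) then the map t ↦ Φ_λ(tu), t > 0, has exactly two critical points t^+(u) < t^-(u), with t^+(u) a local minimum point and t^-(u) a local maximum point; (2) if λ = λ(u) then this map has exactly one critical point, which is degenerate (i.e. the first and second derivatives in t both vanish there); (3) if λ > λ(u) then this map has no critical point. -/

import Mathlib

open Metric Set Filter Topology

/-- `Φ_λ(u) = (1/η) E(u) − (λ/α) A(u) − (1/β) B(u)`. -/
noncomputable def PhiLam {X : Type*} [NormedAddCommGroup X] [NormedSpace ℝ X]
    (E A B : X → ℝ) (α η β l : ℝ) (u : X) : ℝ :=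
  (1 / η) * E u - (l / α) * A u - (1 / β) * B u

/-- `λ(u) = C(α,η,β) E(u)^{(β−α)/(β−η)} / (A(u) B(u)^{(η−α)/(β−η)})`, where
`C(α,η,β) = ((β−η)/(β−α))((η−α)/(β−α))^{(η−α)/(β−η)}`. -/
noncomputable def lamOf {X : Type*} [NormedAddCommGroup X] [NormedSpace ℝ X]
    (E A B : X → ℝ) (α η β : ℝ) (u : X) : ℝ :=
  ((β - η) / (β - α)) * ((η - α) / (β - α)) ^ ((η - α) / (β - η)) *
    E u ^ ((β - α) / (β - η)) / (A u * B u ^ ((η - α) / (β - η)))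

/-- `Λ = inf_{u ≠ 0} λ(u)`. -/
noncomputable def bigLam {X : Type*} [NormedAddCommGroup X] [NormedSpace ℝ X]
    (E A B : X → ℝ) (α η β : ℝ) : ℝ :=
  sInf ((lamOf E A B α η β) '' {u : X | u ≠ 0})

set_option maxHeartbeats 1000000 in
/-- for every `u ≠ 0` there is a threshold `λ(u)` such that the fibering
map `t ↦ Φ_λ(tu)` has exactly two critical points (a local minimum followed by a local
maximum) for `0 < λ < λ(u)`, exactly one, degenerate, critical point for `λ = λ(u)`,
and none for `λ > λ(u)`. -/
theorem statement_16
    {X : Type*} [NormedAddCommGroup X] [NormedSpace ℝ X]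
    (A B E : X → ℝ) (α η β : ℝ)
    (hAC1 : ContDiffOn ℝ 1 A {x : X | x ≠ 0})
    (hBC1 : ContDiffOn ℝ 1 B {x : X | x ≠ 0})
    (hEC1 : ContDiffOn ℝ 1 E {x : X | x ≠ 0})
    (hApos : ∀ u : X, u ≠ 0 → 0 < A u)
    (hBpos : ∀ u : X, u ≠ 0 → 0 < B u)
    (hEpos : ∀ u : X, u ≠ 0 → 0 < E u)
    (hAhom : ∀ t : ℝ, 0 < t → ∀ u : X, u ≠ 0 → A (t • u) = t ^ α * A u)
    (hBhom : ∀ t : ℝ, 0 < t → ∀ u : X, u ≠ 0 → B (t • u) = t ^ β * B u)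
    (hEhom : ∀ t : ℝ, 0 < t → ∀ u : X, u ≠ 0 → E (t • u) = t ^ η * E u)
    (hαη : α < η) (hηβ : η < β) (hα0 : α ≠ 0) (hη0 : η ≠ 0) (hβ0 : β ≠ 0)
    :
    ∀ u : X, u ≠ 0 → ∀ l : ℝ, 0 < l →
      (l < lamOf E A B α η β u →
        ∃ t1 t2 : ℝ, 0 < t1 ∧ t1 < t2 ∧
          IsLocalMin (fun t : ℝ => PhiLam E A B α η β l (t • u)) t1 ∧
          IsLocalMax (fun t : ℝ => PhiLam E A B α η β l (t • u)) t2 ∧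
          (∀ t : ℝ, 0 < t →
            (deriv (fun r : ℝ => PhiLam E A B α η β l (r • u)) t = 0 ↔
              t = t1 ∨ t = t2))) ∧
      (l = lamOf E A B α η β u →
        ∃ t0 : ℝ, 0 < t0 ∧
          deriv (fun r : ℝ => PhiLam E A B α η β l (r • u)) t0 = 0 ∧
          deriv (deriv (fun r : ℝ => PhiLam E A B α η β l (r • u))) t0 = 0 ∧
          (∀ t : ℝ, 0 < t →
            deriv (fun r : ℝ => PhiLam E A B α η β l (r • u)) t = 0 → t = t0)) ∧
      (lamOf E A B α η β u < l →
        ∀ t : ℝ, 0 < t →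
          deriv (fun r : ℝ => PhiLam E A B α η β l (r • u)) t ≠ 0) := by
  intro u hu l hl
  have he : 0 < E u := hEpos u hu
  have ha : 0 < A u := hApos u hu
  have hb : 0 < B u := hBpos u hu
  set Lam := lamOf E A B α η β u with hLam'
  set e := E u with he'
  set a := A u with ha'
  set b := B u with hb'
  set p := η - α with hp'
  set q := β - α with hq'
  set r := β - η with hr'
  have hp : 0 < p := by rw [hp']; linarith
  have hq : 0 < q := by rw [hq']; linarith
  have hr : 0 < r := by rw [hr']; linarith
  have hqpr : q = p + r := by rw [hp', hq', hr']; ring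
  set σ := p / r with hσ'
  set K := p * e / (q * b) with hK'
  have hK : 0 < K := by positivity
  set T := K ^ (1/r) with hT'
  have hT : 0 < T := Real.rpow_pos_of_pos hK _
  set g : ℝ → ℝ := fun t => e * t ^ p - b * t ^ q - l * a with hg'
  set φ : ℝ → ℝ := fun t => (1/η) * (t ^ η * e) - (l/α) * (t ^ α * a) - (1/β) * (t ^ β * b)
    with hφ'
  set F : ℝ → ℝ := fun t : ℝ => PhiLam E A B α η β l (t • u) with hF'
  -- F agrees with φ on positive reals
  have hFeq : ∀ t : ℝ, 0 < t → F t = φ t := by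
    intro t ht
    rw [hF', hφ']
    simp only [PhiLam, hEhom t ht u hu, hAhom t ht u hu, hBhom t ht u hu, ← he', ← ha', ← hb']
  have hFev : ∀ t : ℝ, 0 < t → F =ᶠ[𝓝 t] φ := by
    intro t ht
    exact Filter.eventually_of_mem (Ioi_mem_nhds ht) (fun s hs => hFeq s hs)
  -- derivative of φ
  have hφd : ∀ t : ℝ, 0 < t → HasDerivAt φ (t ^ (α-1) * g t) t := by
    intro t ht
    have h1 : HasDerivAt (fun s : ℝ => (1/η) * (s ^ η * e)) ((1/η) * (η * t ^ (η-1) * e)) t :=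
      ((Real.hasDerivAt_rpow_const (Or.inl ht.ne')).mul_const e).const_mul (1/η)
    have h2 : HasDerivAt (fun s : ℝ => (l/α) * (s ^ α * a)) ((l/α) * (α * t ^ (α-1) * a)) t :=
      ((Real.hasDerivAt_rpow_const (Or.inl ht.ne')).mul_const a).const_mul (l/α)
    have h3 : HasDerivAt (fun s : ℝ => (1/β) * (s ^ β * b)) ((1/β) * (β * t ^ (β-1) * b)) t :=
      ((Real.hasDerivAt_rpow_const (Or.inl ht.ne')).mul_const b).const_mul (1/β)
    have hsum := (h1.sub h2).sub h3
    have hval : (1/η) * (η * t ^ (η-1) * e) - (l/α) * (α * t ^ (α-1) * a)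
        - (1/β) * (β * t ^ (β-1) * b) = t ^ (α-1) * g t := by
      rw [hg']
      simp only
      rw [show η - 1 = (α-1) + p from by rw [hp']; ring,
        show β - 1 = (α-1) + q from by rw [hq']; ring,
        Real.rpow_add ht, Real.rpow_add ht]
      field_simp
      ring
    rw [hφ']
    exact hval ▸ hsum
  have hFd : ∀ t : ℝ, 0 < t → deriv F t = t ^ (α-1) * g t := by
    intro t ht
    rw [(hFev t ht).deriv_eq, (hφd t ht).deriv]
  -- derivative of g
  have hgd : ∀ t : ℝ, 0 < t →
      HasDerivAt g (t ^ (p-1) * (p * e - q * b * t ^ r)) t := by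
    intro t ht
    have h1 : HasDerivAt (fun s : ℝ => e * s ^ p) (e * (p * t ^ (p-1))) t :=
      (Real.hasDerivAt_rpow_const (Or.inl ht.ne')).const_mul e
    have h2 : HasDerivAt (fun s : ℝ => b * s ^ q) (b * (q * t ^ (q-1))) t :=
      (Real.hasDerivAt_rpow_const (Or.inl ht.ne')).const_mul b
    have hsum := (h1.sub h2).sub_const (l * a)
    have hval : e * (p * t ^ (p-1)) - b * (q * t ^ (q-1))
        = t ^ (p-1) * (p * e - q * b * t ^ r) := by
      rw [show q - 1 = (p-1) + r from by rw [hqpr]; ring, Real.rpow_add ht]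
      ring
    rw [hg']
    exact hval ▸ hsum
  have hTr : T ^ r = K := by
    rw [hT', ← Real.rpow_mul hK.le, one_div, inv_mul_cancel₀ hr.ne', Real.rpow_one]
  have hpeqK : q * b * K = p * e := by rw [hK']; field_simp
  -- sign of g'
  have hg'pos : ∀ t : ℝ, 0 < t → t < T → 0 < t ^ (p-1) * (p * e - q * b * t ^ r) := by
    intro t ht htT
    have h1 : t ^ r < K := by
      calc t ^ r < T ^ r := Real.rpow_lt_rpow ht.le htT hr
      _ = K := hTr
    have h2 : q * b * t ^ r < p * e := by
      calc q * b * t ^ r < q * b * K := by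
            exact mul_lt_mul_of_pos_left h1 (by positivity)
      _ = p * e := hpeqK
    have := Real.rpow_pos_of_pos ht (p-1)
    nlinarith
  have hg'neg : ∀ t : ℝ, T < t → t ^ (p-1) * (p * e - q * b * t ^ r) < 0 := by
    intro t htT
    have ht : 0 < t := hT.trans htT
    have h1 : K < t ^ r := by
      calc K = T ^ r := hTr.symm
      _ < t ^ r := Real.rpow_lt_rpow hT.le htT hr
    have h2 : p * e < q * b * t ^ r := by
      calc p * e = q * b * K := hpeqK.symm
      _ < q * b * t ^ r := mul_lt_mul_of_pos_left h1 (by positivity)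
    have := Real.rpow_pos_of_pos ht (p-1)
    nlinarith
  -- monotonicity of g
  have hmonog : StrictMonoOn g (Ioc 0 T) := by
    apply strictMonoOn_of_deriv_pos (convex_Ioc 0 T)
    · intro x hx
      exact (hgd x hx.1).continuousAt.continuousWithinAt
    · intro x hx
      rw [interior_Ioc] at hx
      rw [(hgd x hx.1).deriv]
      exact hg'pos x hx.1 hx.2
  have hantig : StrictAntiOn g (Ici T) := by
    apply strictAntiOn_of_deriv_neg (convex_Ici T)
    · intro x hx
      exact (hgd x (lt_of_lt_of_le hT hx)).continuousAt.continuousWithinAt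
    · intro x hx
      rw [interior_Ici] at hx
      rw [(hgd x (hT.trans hx)).deriv]
      exact hg'neg x hx
  have hgmax : ∀ t : ℝ, 0 < t → t ≠ T → g t < g T := by
    intro t ht htne
    rcases lt_or_gt_of_ne htne with h | h
    · exact hmonog ⟨ht, h.le⟩ ⟨hT, le_refl T⟩ h
    · exact hantig self_mem_Ici h.le h
  -- the value of g at T
  have hTp : T ^ p = K ^ σ := by
    rw [hT', ← Real.rpow_mul hK.le]; congr 1; rw [hσ']; ring
  have hTq : T ^ q = K ^ σ * K := by
    rw [hT', ← Real.rpow_mul hK.le, show 1/r*q = σ + 1 from by rw [hσ', hqpr]; field_simp,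
      Real.rpow_add hK, Real.rpow_one]
  have hLamval : e * T ^ p - b * T ^ q = a * Lam := by
    have hbK : b * K = p * e / q := by rw [hK']; field_simp
    have h2 : e - b * K = e * r / q := by rw [hbK, hqpr]; field_simp; ring
    have hKσ : K ^ σ = (p/q) ^ σ * (e ^ σ / b ^ σ) := by
      rw [hK', show p*e/(q*b) = (p/q) * (e/b) from by field_simp,
        Real.mul_rpow (by positivity) (by positivity), Real.div_rpow he.le hb.le]
    have heσ : e ^ (q/r) = e ^ σ * e := by
      rw [show q/r = σ + 1 from by rw [hσ', hqpr]; field_simp, Real.rpow_add he, Real.rpow_one]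
    have h1 : e * T ^ p - b * T ^ q = K ^ σ * (e - b * K) := by rw [hTp, hTq]; ring
    rw [h1, hKσ, h2, hLam', lamOf, ← hp', ← hq', ← hr', ← he', ← ha', ← hb', ← hσ', heσ]
    have hbσ : (0:ℝ) < b ^ σ := Real.rpow_pos_of_pos hb _
    field_simp
  have hgT : g T = a * Lam - l * a := by
    have : g T = e * T ^ p - b * T ^ q - l * a := by rw [hg']
    rw [this, hLamval]
  have hg'T : T ^ (p-1) * (p * e - q * b * T ^ r) = 0 := by
    rw [hTr, hpeqK]; ring
  refine ⟨?_, ?_, ?_⟩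
  · -- case l < Lam : two critical points
    intro hlt
    have hgTpos : 0 < g T := by rw [hgT]; linarith [mul_pos (sub_pos.mpr hlt) ha, mul_comm a Lam]
    -- find t1 in (0, T)
    set ε := min (T/2) ((l*a/e) ^ (1/p)) with hε'
    have hε0 : 0 < ε := lt_min (by linarith) (Real.rpow_pos_of_pos (by positivity) _)
    have hεT : ε < T := lt_of_le_of_lt (min_le_left _ _) (by linarith)
    have hgε : g ε < 0 := by
      have h1 : ε ^ p ≤ ((l*a/e) ^ (1/p)) ^ p :=
        Real.rpow_le_rpow hε0.le (min_le_right _ _) hp.le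
      have h2 : ((l*a/e) ^ (1/p)) ^ p = l*a/e := by
        rw [← Real.rpow_mul (by positivity), one_div, inv_mul_cancel₀ hp.ne', Real.rpow_one]
      have h3 : e * ε ^ p ≤ l * a := by
        rw [h2] at h1
        calc e * ε ^ p ≤ e * (l*a/e) := by nlinarith
        _ = l * a := by field_simp
      have h4 : 0 < b * ε ^ q := by positivity
      have h5 : g ε = e * ε ^ p - b * ε ^ q - l * a := by rw [hg']
      linarith
    have gcont1 : ContinuousOn g (Icc ε T) := fun x hx =>
      (hgd x (lt_of_lt_of_le hε0 hx.1)).continuousAt.continuousWithinAt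
    obtain ⟨t1, ht1mem, ht1⟩ := intermediate_value_Icc hεT.le gcont1
      (show (0:ℝ) ∈ Icc (g ε) (g T) from ⟨hgε.le, hgTpos.le⟩)
    have ht1pos : 0 < t1 := lt_of_lt_of_le hε0 ht1mem.1
    have ht1T : t1 < T := lt_of_le_of_ne ht1mem.2 (by
      intro h; rw [h] at ht1; rw [ht1] at hgTpos; exact lt_irrefl 0 hgTpos)
    -- find t2 in (T, ∞)
    set M := max (T+1) ((e/b) ^ (1/r) + 1) with hM'
    have hM : T < M := lt_of_lt_of_le (by linarith) (le_max_left _ _)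
    have hM0 : 0 < M := hT.trans hM
    have hgM : g M < 0 := by
      have h1 : (e/b) ^ (1/r) < M := lt_of_lt_of_le (lt_add_one _) (le_max_right _ _)
      have h2 : e/b < M ^ r := by
        have h := Real.rpow_lt_rpow (Real.rpow_pos_of_pos (by positivity) (1/r)).le h1 hr
        rwa [← Real.rpow_mul (by positivity : (0:ℝ) ≤ e/b), one_div,
          inv_mul_cancel₀ hr.ne', Real.rpow_one] at h
      have h3 : e < b * M ^ r := by rw [div_lt_iff₀ hb] at h2; linarith
      have h4 : M ^ q = M ^ p * M ^ r := by rw [hqpr, Real.rpow_add hM0]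
      have h5 : g M = e * M ^ p - b * M ^ q - l * a := by rw [hg']
      have h6 : 0 < M ^ p := Real.rpow_pos_of_pos hM0 _
      nlinarith
    have gcont2 : ContinuousOn g (Icc T M) := fun x hx =>
      (hgd x (lt_of_lt_of_le hT hx.1)).continuousAt.continuousWithinAt
    obtain ⟨t2, ht2mem, ht2⟩ := intermediate_value_Icc' hM.le gcont2
      (show (0:ℝ) ∈ Icc (g M) (g T) from ⟨hgM.le, hgTpos.le⟩)
    have ht2T : T < t2 := lt_of_le_of_ne ht2mem.1 (by
      intro h; rw [← h] at ht2; rw [ht2] at hgTpos; exact lt_irrefl 0 hgTpos)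
    have ht2pos : 0 < t2 := hT.trans ht2T
    have ht1t2 : t1 < t2 := ht1T.trans ht2T
    -- sign of g on the intervals
    have hneg1 : ∀ t : ℝ, 0 < t → t < t1 → g t < 0 := by
      intro t ht h
      have := hmonog ⟨ht, (h.trans ht1T).le⟩ ⟨ht1pos, ht1T.le⟩ h
      linarith [this, ht1.symm ▸ this]
    have hpos12 : ∀ t : ℝ, t1 < t → t < t2 → 0 < g t := by
      intro t h1 h2
      rcases le_or_gt t T with hle | hlt
      · have := hmonog ⟨ht1pos, ht1T.le⟩ ⟨ht1pos.trans h1, hle⟩ h1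
        linarith
      · have := hantig (mem_Ici.mpr hlt.le) (mem_Ici.mpr ht2T.le) h2
        linarith
    have hneg2 : ∀ t : ℝ, t2 < t → g t < 0 := by
      intro t h
      have := hantig (mem_Ici.mpr ht2T.le) (mem_Ici.mpr (ht2T.trans h).le) h
      linarith
    -- monotonicity of φ
    set m := (t1 + t2)/2 with hm'
    have hm1 : t1 < m := by rw [hm']; linarith
    have hm2 : m < t2 := by rw [hm']; linarith
    have hm0 : 0 < m := ht1pos.trans hm1
    have half_pos : 0 < t1/2 := by linarith
    have hAnti1 : AntitoneOn φ (Icc (t1/2) t1) := by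
      apply antitoneOn_of_deriv_nonpos (convex_Icc _ _)
      · intro x hx
        exact (hφd x (lt_of_lt_of_le half_pos hx.1)).continuousAt.continuousWithinAt
      · intro x hx
        rw [interior_Icc] at hx
        exact (hφd x (half_pos.trans hx.1)).differentiableAt.differentiableWithinAt
      · intro x hx
        rw [interior_Icc] at hx
        have hx0 : 0 < x := half_pos.trans hx.1
        rw [(hφd x hx0).deriv]
        exact le_of_lt (mul_neg_of_pos_of_neg (Real.rpow_pos_of_pos hx0 _)
          (hneg1 x hx0 hx.2))
    have hMono1 : MonotoneOn φ (Icc t1 m) := by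
      apply monotoneOn_of_deriv_nonneg (convex_Icc _ _)
      · intro x hx
        exact (hφd x (lt_of_lt_of_le ht1pos hx.1)).continuousAt.continuousWithinAt
      · intro x hx
        rw [interior_Icc] at hx
        exact (hφd x (ht1pos.trans hx.1)).differentiableAt.differentiableWithinAt
      · intro x hx
        rw [interior_Icc] at hx
        have hx0 : 0 < x := ht1pos.trans hx.1
        rw [(hφd x hx0).deriv]
        exact le_of_lt (mul_pos (Real.rpow_pos_of_pos hx0 _)
          (hpos12 x hx.1 (hx.2.trans hm2)))
    have hMono2 : MonotoneOn φ (Icc m t2) := by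
      apply monotoneOn_of_deriv_nonneg (convex_Icc _ _)
      · intro x hx
        exact (hφd x (lt_of_lt_of_le hm0 hx.1)).continuousAt.continuousWithinAt
      · intro x hx
        rw [interior_Icc] at hx
        exact (hφd x (hm0.trans hx.1)).differentiableAt.differentiableWithinAt
      · intro x hx
        rw [interior_Icc] at hx
        have hx0 : 0 < x := hm0.trans hx.1
        rw [(hφd x hx0).deriv]
        exact le_of_lt (mul_pos (Real.rpow_pos_of_pos hx0 _)
          (hpos12 x (hm1.trans hx.1) hx.2))
    have hAnti2 : AntitoneOn φ (Icc t2 (t2+1)) := by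
      apply antitoneOn_of_deriv_nonpos (convex_Icc _ _)
      · intro x hx
        exact (hφd x (lt_of_lt_of_le ht2pos hx.1)).continuousAt.continuousWithinAt
      · intro x hx
        rw [interior_Icc] at hx
        exact (hφd x (ht2pos.trans hx.1)).differentiableAt.differentiableWithinAt
      · intro x hx
        rw [interior_Icc] at hx
        have hx0 : 0 < x := ht2pos.trans hx.1
        rw [(hφd x hx0).deriv]
        exact le_of_lt (mul_neg_of_pos_of_neg (Real.rpow_pos_of_pos hx0 _)
          (hneg2 x hx.1))
    have hminφ : IsLocalMin φ t1 := by
      filter_upwards [Ioo_mem_nhds (by linarith : t1/2 < t1) hm1] with x hx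
      rcases le_total x t1 with h | h
      · exact hAnti1 ⟨hx.1.le, h⟩ ⟨by linarith, le_refl t1⟩ h
      · exact hMono1 ⟨le_refl t1, hm1.le⟩ ⟨h, hx.2.le⟩ h
    have hmaxφ : IsLocalMax φ t2 := by
      filter_upwards [Ioo_mem_nhds hm2 (lt_add_one t2)] with x hx
      rcases le_total x t2 with h | h
      · exact hMono2 ⟨hx.1.le, h⟩ ⟨hm2.le, le_refl t2⟩ h
      · exact hAnti2 ⟨le_refl t2, by linarith⟩ ⟨h, hx.2.le⟩ h
    have hminF : IsLocalMin F t1 := hminφ.congr (hFev t1 ht1pos).symm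
    have hmaxF : IsLocalMax F t2 := hmaxφ.congr (hFev t2 ht2pos).symm
    refine ⟨t1, t2, ht1pos, ht1t2, hminF, hmaxF, ?_⟩
    intro t ht
    rw [hFd t ht]
    constructor
    · intro h0
      have hgt : g t = 0 := by
        rcases mul_eq_zero.mp h0 with h | h
        · exact absurd h (Real.rpow_pos_of_pos ht _).ne'
        · exact h
      by_contra hne
      push_neg at hne
      obtain ⟨hn1, hn2⟩ := hne
      rcases lt_trichotomy t t1 with h | h | h
      · linarith [hneg1 t ht h]
      · exact hn1 h
      · rcases lt_trichotomy t t2 with h' | h' | h'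
        · linarith [hpos12 t h h']
        · exact hn2 h'
        · linarith [hneg2 t h']
    · rintro (rfl | rfl)
      · rw [ht1, mul_zero]
      · rw [ht2, mul_zero]
  · -- degenerate case l = Lam
    intro hleq
    have hgT0 : g T = 0 := by rw [hgT, hleq]; ring
    refine ⟨T, hT, ?_, ?_, ?_⟩
    · rw [hFd T hT, hgT0, mul_zero]
    · have hdF : deriv F =ᶠ[𝓝 T] (fun t => t ^ (α-1) * g t) :=
        Filter.eventually_of_mem (Ioi_mem_nhds hT) (fun t ht => hFd t ht)
      have hprod : HasDerivAt (fun t : ℝ => t ^ (α-1) * g t)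
          ((α-1) * T ^ (α-1-1) * g T + T ^ (α-1) * (T ^ (p-1) * (p * e - q * b * T ^ r))) T :=
        (Real.hasDerivAt_rpow_const (Or.inl hT.ne')).mul (hgd T hT)
      rw [hdF.deriv_eq, hprod.deriv, hgT0, hg'T]
      ring
    · intro t ht h0
      rw [hFd t ht] at h0
      have hgt : g t = 0 := by
        rcases mul_eq_zero.mp h0 with h | h
        · exact absurd h (Real.rpow_pos_of_pos ht _).ne'
        · exact h
      by_contra hne
      have := hgmax t ht hne
      rw [hgt, hgT0] at this
      exact lt_irrefl 0 this
  · -- case Lam < l : no critical point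
    intro hlt t ht
    have hgTneg : g T < 0 := by rw [hgT]; nlinarith [mul_pos (sub_pos.mpr hlt) ha]
    have h1 : g t ≤ g T := by
      rcases eq_or_ne t T with rfl | h
      · exact le_refl _
      · exact (hgmax t ht h).le
    rw [hFd t ht]
    exact (mul_neg_of_pos_of_neg (Real.rpow_pos_of_pos ht _) (lt_of_le_of_lt h1 hgTneg)).ne
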